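/- Let m ≥ 1 and let η₁, …, η_m > 0 with η := Σ_{i=1}^m η_i < 1. Define F : (0, 1) → ℝ by F(t) = Σ_{i=1}^m log₂(η_i/((1−η) t) + 1) + log₂(η/((1−η)(1−t)) + 1). Then F is strictly convex on (0, 1), and any t* ∈ (0, 1) satisfying Σ_{i=1}^m 1/(t*² (1−η)/η_i + t*) = 1/((1−t*)² (1−η)/η + (1−t*)) is the unique global minimizer of F on (0, 1), i.e., F(t) ≥ F(t*) for all t ∈ (0, 1) with equality only at t = t*. -/

import Mathlib

open scoped BigOperators

/-- The function
`F(t) = ∑_{i=1}^m log₂(ηᵢ/((1−η)t) + 1) + log₂(η/((1−η)(1−t)) + 1)`, where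
`η = ∑ᵢ ηᵢ`, arising from a beamsplitter squashing channel of transmissivity `t` for a
pure-loss bosonic broadcast channel with transmission coefficients `η₁,…,η_m`. -/
noncomputable def squashBound {m : ℕ} (η : Fin m → ℝ) (t : ℝ) : ℝ :=
  (∑ i, Real.logb 2 (η i / ((1 - ∑ j, η j) * t) + 1))
    + Real.logb 2 ((∑ j, η j) / ((1 - ∑ j, η j) * (1 - t)) + 1)

private lemma strictConvexOn_congr {f g : ℝ → ℝ} {s : Set ℝ} (h : StrictConvexOn ℝ s g)
    (he : Set.EqOn g f s) : StrictConvexOn ℝ s f :=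
  ⟨h.1, by
    intro x hx y hy hxy a b ha hb hab
    rw [← he hx, ← he hy, ← he (h.1 hx hy ha.le hb.le hab)]
    exact h.2 hx hy hxy ha hb hab⟩

/-- Let `m ≥ 1` and `η₁,…,η_m > 0` with `η = ∑ᵢ ηᵢ < 1`.  Then `F` is
strictly convex on `(0,1)`, and any `t* ∈ (0,1)` satisfying the stationarity equation
`∑ᵢ 1/(t*²(1−η)/ηᵢ + t*) = 1/((1−t*)²(1−η)/η + (1−t*))` is the unique global minimizer
of `F` on `(0,1)`: `F(t) ≥ F(t*)` for all `t ∈ (0,1)`, with equality only at `t = t*`. -/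
theorem squashBound_strictConvex_min {m : ℕ} (hm : 1 ≤ m) (η : Fin m → ℝ)
    (hη : ∀ i, 0 < η i) (hsum : (∑ j, η j) < 1) :
    StrictConvexOn ℝ (Set.Ioo (0 : ℝ) 1) (squashBound η)
    ∧ ∀ t₀ ∈ Set.Ioo (0 : ℝ) 1,
        (∑ i, 1 / (t₀ ^ 2 * (1 - ∑ j, η j) / η i + t₀))
            = 1 / ((1 - t₀) ^ 2 * (1 - ∑ j, η j) / (∑ j, η j) + (1 - t₀)) →
        ∀ t ∈ Set.Ioo (0 : ℝ) 1,
          squashBound η t₀ ≤ squashBound η t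
          ∧ (squashBound η t = squashBound η t₀ → t = t₀) := by
  have hne : (Finset.univ : Finset (Fin m)).Nonempty := ⟨⟨0, hm⟩, Finset.mem_univ _⟩
  have hS : 0 < ∑ j, η j := Finset.sum_pos (fun i _ => hη i) hne
  set S : ℝ := ∑ j, η j with hSdef
  have hs : 0 < 1 - S := by linarith
  set s : ℝ := 1 - S with hsdef
  set H : ℝ → ℝ := fun t => (∑ i, (Real.log (η i + s * t) - Real.log (s * t)))
      + (Real.log (S + s * (1 - t)) - Real.log (s * (1 - t))) with hHdef
  set H' : ℝ → ℝ := fun t => (∑ i, (s / (η i + s * t) - 1 / t))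
      + (1 / (1 - t) - s / (S + s * (1 - t))) with hH'def
  set H'' : ℝ → ℝ := fun t => (∑ i, (1 / t ^ 2 - s ^ 2 / (η i + s * t) ^ 2))
      + (1 / (1 - t) ^ 2 - s ^ 2 / (S + s * (1 - t)) ^ 2) with hH''def
  set G : ℝ → ℝ := fun t => H t / Real.log 2 with hGdef
  have hlog2 : 0 < Real.log 2 := Real.log_pos (by norm_num)
  -- G agrees with squashBound on (0,1)
  have hEq : Set.EqOn G (squashBound η) (Set.Ioo (0 : ℝ) 1) := by
    intro t ht
    obtain ⟨ht0, ht1⟩ := ht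
    have h1t : 0 < 1 - t := by linarith
    have hst : 0 < s * t := mul_pos hs ht0
    have hst1 : 0 < s * (1 - t) := mul_pos hs h1t
    unfold squashBound
    rw [← hSdef, ← hsdef]
    have h1 : ∀ i : Fin m, Real.logb 2 (η i / (s * t) + 1)
        = (Real.log (η i + s * t) - Real.log (s * t)) / Real.log 2 := by
      intro i
      have hx : 0 < η i + s * t := add_pos (hη i) hst
      have : η i / (s * t) + 1 = (η i + s * t) / (s * t) := by field_simp
      rw [this, ← Real.log_div_log, Real.log_div hx.ne' hst.ne']
    have h2 : Real.logb 2 (S / (s * (1 - t)) + 1)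
        = (Real.log (S + s * (1 - t)) - Real.log (s * (1 - t))) / Real.log 2 := by
      have hx : 0 < S + s * (1 - t) := add_pos hS hst1
      have : S / (s * (1 - t)) + 1 = (S + s * (1 - t)) / (s * (1 - t)) := by field_simp
      rw [this, ← Real.log_div_log, Real.log_div hx.ne' hst1.ne']
    simp only [hGdef, hHdef]
    rw [Finset.sum_congr rfl (fun i _ => h1 i), h2, add_div, Finset.sum_div]
  -- first derivative
  have hH'at : ∀ t ∈ Set.Ioo (0 : ℝ) 1, HasDerivAt H (H' t) t := by
    intro t ht
    obtain ⟨ht0, ht1⟩ := ht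
    have h1t : 0 < 1 - t := by linarith
    have hst : 0 < s * t := mul_pos hs ht0
    have hst1 : 0 < s * (1 - t) := mul_pos hs h1t
    have hSs : 0 < S + s * (1 - t) := add_pos hS hst1
    have hterm : ∀ i ∈ (Finset.univ : Finset (Fin m)),
        HasDerivAt (fun u => Real.log (η i + s * u) - Real.log (s * u))
          (s / (η i + s * t) - 1 / t) t := by
      intro i _
      have hx : 0 < η i + s * t := add_pos (hη i) hst
      have d1 : HasDerivAt (fun u : ℝ => η i + s * u) s t := by
        simpa using ((hasDerivAt_id t).const_mul s).const_add (η i)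
      have l1 : HasDerivAt (fun u => Real.log (η i + s * u)) (s / (η i + s * t)) t := by
        have := (Real.hasDerivAt_log hx.ne').comp t d1
        simpa [Function.comp_def, div_eq_inv_mul] using this
      have d2 : HasDerivAt (fun u : ℝ => s * u) s t := by
        simpa using (hasDerivAt_id t).const_mul s
      have l2 : HasDerivAt (fun u => Real.log (s * u)) (1 / t) t := by
        have h := (Real.hasDerivAt_log hst.ne').comp t d2
        have hv : (s * t)⁻¹ * s = 1 / t := by field_simp
        rw [hv] at h
        exact h
      exact l1.sub l2
    have hsum' : HasDerivAt (fun u => ∑ i, (Real.log (η i + s * u) - Real.log (s * u)))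
        (∑ i, (s / (η i + s * t) - 1 / t)) t := HasDerivAt.fun_sum hterm
    have d3 : HasDerivAt (fun u : ℝ => S + s * (1 - u)) (-s) t := by
      have : HasDerivAt (fun u : ℝ => 1 - u) (-1) t := by
        simpa using (hasDerivAt_id t).const_sub 1
      simpa using (this.const_mul s).const_add S
    have d4 : HasDerivAt (fun u : ℝ => s * (1 - u)) (-s) t := by
      have : HasDerivAt (fun u : ℝ => 1 - u) (-1) t := by
        simpa using (hasDerivAt_id t).const_sub 1
      simpa using this.const_mul s
    have l3 : HasDerivAt (fun u => Real.log (S + s * (1 - u))) (-s / (S + s * (1 - t))) t := by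
      have := (Real.hasDerivAt_log hSs.ne').comp t d3
      simpa [Function.comp_def, div_eq_inv_mul, mul_comm] using this
    have l4 : HasDerivAt (fun u => Real.log (s * (1 - u))) (-(1 / (1 - t))) t := by
      have h := (Real.hasDerivAt_log hst1.ne').comp t d4
      have hv : (s * (1 - t))⁻¹ * -s = -(1 / (1 - t)) := by field_simp
      rw [hv] at h
      exact h
    have := hsum'.fun_add (l3.fun_sub l4)
    convert this using 1
    · rfl
    · rfl
    ring
  -- second derivative
  have hH''at : ∀ t ∈ Set.Ioo (0 : ℝ) 1, HasDerivAt H' (H'' t) t := by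
    intro t ht
    obtain ⟨ht0, ht1⟩ := ht
    have h1t : 0 < 1 - t := by linarith
    have hst : 0 < s * t := mul_pos hs ht0
    have hst1 : 0 < s * (1 - t) := mul_pos hs h1t
    have hSs : 0 < S + s * (1 - t) := add_pos hS hst1
    have hterm : ∀ i ∈ (Finset.univ : Finset (Fin m)),
        HasDerivAt (fun u => s / (η i + s * u) - 1 / u)
          (1 / t ^ 2 - s ^ 2 / (η i + s * t) ^ 2) t := by
      intro i _
      have hx : 0 < η i + s * t := add_pos (hη i) hst
      have d1 : HasDerivAt (fun u : ℝ => η i + s * u) s t := by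
        simpa using ((hasDerivAt_id t).const_mul s).const_add (η i)
      have l1 : HasDerivAt (fun u => s / (η i + s * u))
          (s * (-s / (η i + s * t) ^ 2)) t := by
        have := (d1.inv hx.ne').const_mul s
        simpa [div_eq_mul_inv] using this
      have l2 : HasDerivAt (fun u : ℝ => 1 / u) (-(t ^ 2)⁻¹) t := by
        simpa [one_div] using hasDerivAt_inv ht0.ne'
      have := l1.fun_sub l2
      convert this using 1
      · rfl
      · rfl
      ring
    have hsum' := HasDerivAt.fun_sum hterm
    have d3 : HasDerivAt (fun u : ℝ => S + s * (1 - u)) (-s) t := by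
      have : HasDerivAt (fun u : ℝ => 1 - u) (-1) t := by
        simpa using (hasDerivAt_id t).const_sub 1
      simpa using (this.const_mul s).const_add S
    have d5 : HasDerivAt (fun u : ℝ => 1 - u) (-1) t := by
      simpa using (hasDerivAt_id t).const_sub 1
    have l3 : HasDerivAt (fun u : ℝ => 1 / (1 - u)) (-(-1) / (1 - t) ^ 2) t := by
      simpa [one_div] using d5.fun_inv h1t.ne'
    have l4 : HasDerivAt (fun u => s / (S + s * (1 - u)))
        (s * (-(-s) / (S + s * (1 - t)) ^ 2)) t := by
      have := (d3.inv hSs.ne').const_mul s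
      simpa [div_eq_mul_inv] using this
    have := hsum'.fun_add (l3.fun_sub l4)
    convert this using 1
    · rfl
    · rfl
    ring
  -- positivity of second derivative
  have hH''pos : ∀ t ∈ Set.Ioo (0 : ℝ) 1, 0 < H'' t := by
    intro t ht
    obtain ⟨ht0, ht1⟩ := ht
    have h1t : 0 < 1 - t := by linarith
    have key : ∀ a b : ℝ, 0 < a → 0 < b → 0 < s → s * b < a → 0 < 1 / b ^ 2 - s ^ 2 / a ^ 2 := by
      intro a b ha hb hs' hba
      have h : s / a < 1 / b := by
        rw [div_lt_div_iff₀ ha hb]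
        linarith
      have h2 : (s / a) ^ 2 < (1 / b) ^ 2 :=
        pow_lt_pow_left₀ h (div_nonneg hs'.le ha.le) two_ne_zero
      rw [div_pow, div_pow, one_pow] at h2
      linarith
    have t1 : ∀ i : Fin m, 0 < 1 / t ^ 2 - s ^ 2 / (η i + s * t) ^ 2 := by
      intro i
      exact key _ _ (add_pos (hη i) (mul_pos hs ht0)) ht0 hs (by nlinarith [hη i])
    have t2 : 0 < 1 / (1 - t) ^ 2 - s ^ 2 / (S + s * (1 - t)) ^ 2 :=
      key _ _ (add_pos hS (mul_pos hs h1t)) h1t hs (by nlinarith)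
    exact add_pos (Finset.sum_pos (fun i _ => t1 i) hne) t2
  -- continuity
  have hH'cont : ContinuousOn H' (Set.Ioo (0 : ℝ) 1) :=
    fun t ht => ((hH''at t ht).differentiableAt.continuousAt).continuousWithinAt
  have hGcont : ContinuousOn G (Set.Ioo (0 : ℝ) 1) :=
    fun t ht => (((hH'at t ht).div_const _).differentiableAt.continuousAt).continuousWithinAt
  -- monotonicity of H'
  have hmono : StrictMonoOn H' (Set.Ioo (0 : ℝ) 1) := by
    apply strictMonoOn_of_deriv_pos (convex_Ioo 0 1) hH'cont
    intro x hx
    rw [interior_Ioo] at hx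
    rw [(hH''at x hx).deriv]
    exact hH''pos x hx
  -- strict convexity of G
  have hG'at : ∀ t ∈ Set.Ioo (0 : ℝ) 1, HasDerivAt G (H' t / Real.log 2) t :=
    fun t ht => (hH'at t ht).div_const _
  have hconvG : StrictConvexOn ℝ (Set.Ioo (0 : ℝ) 1) G := by
    apply StrictMonoOn.strictConvexOn_of_deriv (convex_Ioo 0 1) hGcont
    rw [interior_Ioo]
    intro x hx y hy hxy
    rw [(hG'at x hx).deriv, (hG'at y hy).deriv]
    exact div_lt_div_of_pos_right (hmono hx hy hxy) hlog2
  refine ⟨strictConvexOn_congr hconvG hEq, ?_⟩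
  -- minimizer part
  intro t₀ ht₀ hstat t ht
  obtain ⟨ht₀0, ht₀1⟩ := ht₀
  have ht₀m : t₀ ∈ Set.Ioo (0 : ℝ) 1 := ⟨ht₀0, ht₀1⟩
  have h1t₀ : 0 < 1 - t₀ := by linarith
  -- H' t₀ = 0
  have hzero : H' t₀ = 0 := by
    have e1 : ∀ i : Fin m, 1 / (t₀ ^ 2 * s / η i + t₀) = 1 / t₀ - s / (η i + s * t₀) := by
      intro i
      have hx : 0 < η i + s * t₀ := add_pos (hη i) (mul_pos hs ht₀0)
      have hd : 0 < t₀ ^ 2 * s / η i + t₀ :=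
        add_pos (div_pos (mul_pos (pow_pos ht₀0 2) hs) (hη i)) ht₀0
      have hηi : η i ≠ 0 := (hη i).ne'
      rw [div_sub_div _ _ ht₀0.ne' hx.ne', div_eq_div_iff hd.ne' (mul_pos ht₀0 hx).ne']
      field_simp
      ring
    have e2 : 1 / ((1 - t₀) ^ 2 * s / S + (1 - t₀)) = 1 / (1 - t₀) - s / (S + s * (1 - t₀)) := by
      have hx : 0 < S + s * (1 - t₀) := add_pos hS (mul_pos hs h1t₀)
      have hd : 0 < (1 - t₀) ^ 2 * s / S + (1 - t₀) :=
        add_pos (div_pos (mul_pos (pow_pos h1t₀ 2) hs) hS) h1t₀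
      have hS0 : S ≠ 0 := hS.ne'
      rw [div_sub_div _ _ h1t₀.ne' hx.ne', div_eq_div_iff hd.ne' (mul_pos h1t₀ hx).ne']
      field_simp
      ring
    rw [Finset.sum_congr rfl (fun i _ => e1 i), e2] at hstat
    have : (∑ i, (s / (η i + s * t₀) - 1 / t₀)) = -(∑ i, (1 / t₀ - s / (η i + s * t₀))) := by
      rw [← Finset.sum_neg_distrib]
      exact Finset.sum_congr rfl (fun i _ => by ring)
    simp only [hH'def]
    rw [this, hstat]
    ring
  -- strict inequality for t ≠ t₀
  have hlt : t ≠ t₀ → G t₀ < G t := by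
    intro hne'
    rcases lt_or_gt_of_ne hne' with hlt | hgt
    · -- t < t₀
      have hsub : Set.Icc t t₀ ⊆ Set.Ioo (0 : ℝ) 1 :=
        fun x hx => ⟨lt_of_lt_of_le ht.1 hx.1, lt_of_le_of_lt hx.2 ht₀1⟩
      obtain ⟨c, hc, hceq⟩ := exists_hasDerivAt_eq_slope G (fun x => H' x / Real.log 2) hlt
        (hGcont.mono hsub) (fun x hx => hG'at x (hsub (Set.Ioo_subset_Icc_self hx)))
      have hcm : c ∈ Set.Ioo (0 : ℝ) 1 := hsub (Set.Ioo_subset_Icc_self hc)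
      have hH'c : H' c < 0 := by
        have := hmono hcm ht₀m hc.2
        rwa [hzero] at this
      have hslope : (G t₀ - G t) / (t₀ - t) < 0 := by
        rw [← hceq]; exact div_neg_of_neg_of_pos hH'c hlog2
      have hpos : 0 < t₀ - t := by linarith
      rcases div_neg_iff.mp hslope with ⟨_, h2⟩ | ⟨h1, _⟩
      · linarith
      · linarith
    · -- t₀ < t
      have hsub : Set.Icc t₀ t ⊆ Set.Ioo (0 : ℝ) 1 :=
        fun x hx => ⟨lt_of_lt_of_le ht₀0 hx.1, lt_of_le_of_lt hx.2 ht.2⟩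
      obtain ⟨c, hc, hceq⟩ := exists_hasDerivAt_eq_slope G (fun x => H' x / Real.log 2) hgt
        (hGcont.mono hsub) (fun x hx => hG'at x (hsub (Set.Ioo_subset_Icc_self hx)))
      have hcm : c ∈ Set.Ioo (0 : ℝ) 1 := hsub (Set.Ioo_subset_Icc_self hc)
      have hH'c : 0 < H' c := by
        have := hmono ht₀m hcm hc.1
        rwa [hzero] at this
      have hslope : 0 < (G t - G t₀) / (t - t₀) := by
        rw [← hceq]; exact div_pos hH'c hlog2
      have hpos : 0 < t - t₀ := by linarith
      rcases div_pos_iff.mp hslope with ⟨h1, _⟩ | ⟨_, h2⟩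
      · linarith
      · linarith
  rw [← hEq ht, ← hEq ht₀m]
  constructor
  · rcases eq_or_ne t t₀ with rfl | hne'
    · exact le_rfl
    · exact (hlt hne').le
  · intro heq
    by_contra hne'
    exact absurd heq (ne_of_gt (hlt hne'))
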